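/- Let p be a prime, k an integer not divisible by p, and m₁, m₂ natural numbers. Then A_k^{m₁} · (A_k^{m₂})ᵀ equals the 2×2 identity matrix if and only if m₁ ≡ m₂ (mod p). (Rotating the hash qubit counterclockwise for the first string and clockwise for the second returns it to the initial state exactly when the two lengths agree modulo p, which is the correctness of the quantum hash comparison.) -/

import Mathlib

open Matrix

/-- The 2×2 real rotation matrix `A_k` by angle `2kπ/p`, the transition matrix of the
two-state QFA `M_k` for the language `MOD_p` on input symbol `a`. -/
noncomputable def Ak (p : ℕ) (k : ℤ) : Matrix (Fin 2) (Fin 2) ℝ :=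
  !![Real.cos (2 * k * Real.pi / p), -Real.sin (2 * k * Real.pi / p);
     Real.sin (2 * k * Real.pi / p),  Real.cos (2 * k * Real.pi / p)]

/-- General rotation matrix. -/
noncomputable def Rot (x : ℝ) : Matrix (Fin 2) (Fin 2) ℝ :=
  !![Real.cos x, -Real.sin x; Real.sin x, Real.cos x]

lemma rot_mul (x y : ℝ) : Rot x * Rot y = Rot (x + y) := by
  ext i j
  fin_cases i <;> fin_cases j <;>
    simp [Rot, Matrix.mul_apply, Fin.sum_univ_two, Real.cos_add, Real.sin_add] <;> ring

lemma rot_pow (x : ℝ) (m : ℕ) : Rot x ^ m = Rot (m * x) := by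
  induction m with
  | zero =>
    ext i j
    fin_cases i <;> fin_cases j <;> simp [Rot]
  | succ n ih =>
    rw [pow_succ, ih, rot_mul]
    push_cast
    ring_nf

lemma rot_transpose (x : ℝ) : (Rot x)ᵀ = Rot (-x) := by
  ext i j
  fin_cases i <;> fin_cases j <;> simp [Rot]

lemma rot_eq_one_iff (x : ℝ) : Rot x = 1 ↔ Real.cos x = 1 := by
  constructor
  · intro h
    have := congrArg (fun M => M 0 0) h
    simpa [Rot] using this
  · intro h
    have hs : Real.sin x = 0 := by
      have := Real.sin_sq_add_cos_sq x
      nlinarith [Real.sin_sq_add_cos_sq x]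
    ext i j
    fin_cases i <;> fin_cases j <;> simp [Rot, h, hs]

/-- Correctness of the quantum hash comparison: rotating counterclockwise `m₁` times and
clockwise `m₂` times returns to the initial state exactly when `m₁ ≡ m₂ (mod p)`. -/
theorem ak_pow_mul_pow_transpose_eq_one_iff (p : ℕ) (hp : p.Prime) (k : ℤ)
    (hk : ¬ (p : ℤ) ∣ k) (m₁ m₂ : ℕ) :
    Ak p k ^ m₁ * (Ak p k ^ m₂)ᵀ = 1 ↔ m₁ ≡ m₂ [MOD p] := by
  have hA : Ak p k = Rot (2 * k * Real.pi / p) := rfl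
  set θ : ℝ := 2 * k * Real.pi / p with hθ
  have hπ : Real.pi ≠ 0 := Real.pi_ne_zero
  have hp0 : (p : ℝ) ≠ 0 := by exact_mod_cast hp.pos.ne'
  rw [hA, rot_pow, rot_pow, rot_transpose, rot_mul, rot_eq_one_iff, Real.cos_eq_one_iff]
  constructor
  · rintro ⟨n, hn⟩
    -- n * (2π) = m₁ θ + -(m₂ θ)
    have key : (n : ℝ) * p = ((m₁ : ℝ) - m₂) * k := by
      have h2 : (n : ℝ) * (2 * Real.pi) * p = ((m₁ : ℝ) - m₂) * (2 * k * Real.pi / p) * p := by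
        rw [hn]; ring
      field_simp at h2
      have h3 : ((n : ℝ) * p) * (2 * Real.pi) = (((m₁ : ℝ) - m₂) * k) * (2 * Real.pi) := by
        linear_combination (2 * Real.pi) * h2
      exact mul_right_cancel₀ (by positivity) h3
    have keyZ : (n : ℤ) * p = ((m₁ : ℤ) - m₂) * k := by exact_mod_cast key
    have hdvd : (p : ℤ) ∣ ((m₁ : ℤ) - m₂) * k := ⟨n, by linarith [keyZ]⟩
    have hd := ((Nat.prime_iff_prime_int.mp hp).dvd_mul.mp hdvd).resolve_right hk
    exact (Nat.modEq_iff_dvd).mpr (by simpa [neg_sub] using dvd_neg.mpr hd)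
  · intro h
    obtain ⟨n, hn⟩ := (Nat.modEq_iff_dvd).mp h
    refine ⟨-n * k, ?_⟩
    have hm : (m₂ : ℝ) - m₁ = p * n := by exact_mod_cast hn
    have : ((m₁ : ℝ) - m₂) = -(p * n) := by linarith
    rw [hθ]
    push_cast
    field_simp
    linear_combination ((k : ℝ)) * hm
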